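/- Let $V_1, \ldots, V_n$ be finite nonempty families of vectors in the closed Euclidean unit ball of $\mathbb{R}^d$ such that $0 \in \mathrm{conv}(V_1) + \cdots + \mathrm{conv}(V_n)$. Then there exists a selection of vectors $v_i \in V_i$ for each $i \in [n]$ such that $\|v_1 + \cdots + v_n\|_2 \leq \sqrt{d}$. -/

import Mathlib

set_option maxHeartbeats 1000000

open scoped Pointwise
open RealInnerProductSpace

section helpers

variable {E : Type*} [NormedAddCommGroup E] [InnerProductSpace ℝ E]

private lemma cb_exists_inner_le (s : Finset E) {x : E} (hx : x ∈ convexHull ℝ (s : Set E))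
    (y : E) : ∃ v ∈ s, ⟪y, v⟫ ≤ ⟪y, x⟫ := by
  rw [Finset.convexHull_eq] at hx
  obtain ⟨w, hw0, hw1, hxc⟩ := hx
  rw [Finset.centerMass_eq_of_sum_1 _ _ hw1] at hxc
  by_contra hcon
  push_neg at hcon
  obtain ⟨v₀, hv₀, hv₀pos⟩ : ∃ v ∈ s, 0 < w v := by
    by_contra hall
    push_neg at hall
    have : ∑ v ∈ s, w v = 0 :=
      Finset.sum_eq_zero fun v hv => le_antisymm (hall v hv) (hw0 v hv)
    simp [this] at hw1
  have hlt : ∑ v ∈ s, w v * ⟪y, x⟫ < ∑ v ∈ s, w v * ⟪y, v⟫ := by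
    refine Finset.sum_lt_sum (fun v hv => ?_) ⟨v₀, hv₀, ?_⟩
    · exact mul_le_mul_of_nonneg_left (hcon v hv).le (hw0 v hv)
    · exact mul_lt_mul_of_pos_left (hcon v₀ hv₀) hv₀pos
  rw [← Finset.sum_mul, hw1, one_mul] at hlt
  have : ⟪y, x⟫ = ∑ v ∈ s, w v * ⟪y, v⟫ := by
    rw [← hxc, inner_sum]
    exact Finset.sum_congr rfl fun v hv => real_inner_smul_right y (v) (w v)
  linarith

private lemma cb_greedy {n : ℕ} (V : Fin n → Finset E) (hball : ∀ i, ∀ v ∈ V i, ‖v‖ ≤ 1)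
    (F : Finset (Fin n)) (x : Fin n → E) (T : E)
    (hx : ∀ i ∈ F, x i ∈ convexHull ℝ ((V i : Set E))) :
    ∃ v : Fin n → E, (∀ i ∈ F, v i ∈ V i) ∧
      ‖T + ∑ i ∈ F, (v i - x i)‖ ^ 2 ≤ ‖T‖ ^ 2 + F.card := by
  classical
  induction F using Finset.cons_induction with
  | empty => exact ⟨fun i => x i, by simp, by simp⟩
  | cons i F' hi IH =>
    obtain ⟨v', hv'mem, hv'⟩ := IH fun j hj => hx j (Finset.mem_cons_of_mem hj)
    set T'' := T + ∑ j ∈ F', (v' j - x j) with hT''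
    obtain ⟨v₀, hv₀mem, hv₀⟩ :=
      cb_exists_inner_le (V i) (hx i (Finset.mem_cons_self i F')) (T'' - x i)
    refine ⟨Function.update v' i v₀, ?_, ?_⟩
    · intro j hj
      rcases Finset.mem_cons.mp hj with rfl | hjm
      · simpa using hv₀mem
      · rw [Function.update_of_ne (fun hji => hi (by rw [← hji]; exact hjm))]
        exact hv'mem j hjm
    · have hsum : ∑ j ∈ Finset.cons i F' hi, (Function.update v' i v₀ j - x j)
          = (v₀ - x i) + ∑ j ∈ F', (v' j - x j) := by
        rw [Finset.sum_cons, Function.update_self]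
        congr 1
        exact Finset.sum_congr rfl fun j hj => by
          rw [Function.update_of_ne (fun hji => hi (by rw [← hji]; exact hj))]
      have key : ‖T'' + (v₀ - x i)‖ ^ 2 ≤ ‖T''‖ ^ 2 + 1 := by
        have h1 : ‖T'' + (v₀ - x i)‖ ^ 2
            = ‖T''‖ ^ 2 + 2 * ⟪T'', v₀ - x i⟫ + ‖v₀ - x i‖ ^ 2 :=
          norm_add_sq_real T'' (v₀ - x i)
        have h2 : ‖x i + (v₀ - x i)‖ ^ 2
            = ‖x i‖ ^ 2 + 2 * ⟪x i, v₀ - x i⟫ + ‖v₀ - x i‖ ^ 2 :=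
          norm_add_sq_real (x i) (v₀ - x i)
        rw [add_sub_cancel] at h2
        have h3 : ⟪T'', v₀ - x i⟫ = ⟪T'' - x i, v₀ - x i⟫ + ⟪x i, v₀ - x i⟫ := by
          rw [← inner_add_left]
          congr 1
          abel
        have h4 : ⟪T'' - x i, v₀ - x i⟫ = ⟪T'' - x i, v₀⟫ - ⟪T'' - x i, x i⟫ :=
          inner_sub_right _ _ _
        have h5 : ‖v₀‖ ^ 2 ≤ 1 := by
          have := hball i v₀ hv₀mem
          nlinarith [norm_nonneg v₀]
        have h6 : (0:ℝ) ≤ ‖x i‖ ^ 2 := sq_nonneg _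
        nlinarith [hv₀]
      have heq : ‖T + ((v₀ - x i) + ∑ j ∈ F', (v' j - x j))‖ ^ 2
          = ‖T'' + (v₀ - x i)‖ ^ 2 := by
        congr 1
        rw [hT'']
        abel
      rw [hsum, Finset.card_cons, heq]
      push_cast
      linarith

end helpers

private lemma cb_main {d n : ℕ} (V : Fin n → Finset (EuclideanSpace ℝ (Fin d)))
    (hne : ∀ i, (V i).Nonempty)
    (hball : ∀ i, ∀ v ∈ V i, ‖v‖ ≤ 1)
    (N : ℕ) (w : Fin n → EuclideanSpace ℝ (Fin d) → ℝ)
    (hw0 : ∀ i, ∀ v ∈ V i, 0 ≤ w i v)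
    (hw1 : ∀ i, ∑ v ∈ V i, w i v = 1)
    (hws : (∑ i, ∑ v ∈ V i, w i v • v) = 0)
    (hcard : (∑ i, ((V i).filter fun v => w i v ≠ 0).card) ≤ N) :
    ∃ v : Fin n → EuclideanSpace ℝ (Fin d), (∀ i, v i ∈ V i) ∧ ‖∑ i, v i‖ ≤ Real.sqrt d := by
  classical
  induction N using Nat.strong_induction_on generalizing w with
  | _ N IH =>
  set supp : Fin n → Finset (EuclideanSpace ℝ (Fin d)) :=
    fun i => (V i).filter fun v => w i v ≠ 0 with hsupp
  have hsub : ∀ i, supp i ⊆ V i := fun i => Finset.filter_subset _ _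
  have hwpos : ∀ i, ∀ v ∈ supp i, 0 < w i v := by
    intro i v hv
    obtain ⟨hvV, hv0⟩ := Finset.mem_filter.mp hv
    exact lt_of_le_of_ne (hw0 i v hvV) (Ne.symm hv0)
  have hsuppne : ∀ i, (supp i).Nonempty := by
    intro i
    rw [Finset.nonempty_iff_ne_empty]
    intro hemp
    have : ∑ v ∈ V i, w i v = 0 := by
      refine Finset.sum_eq_zero fun v hv => ?_
      by_contra hv0
      exact (Finset.eq_empty_iff_forall_notMem.mp hemp v)
        (Finset.mem_filter.mpr ⟨hv, hv0⟩)
    rw [hw1 i] at this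
    norm_num at this
  set F : Finset (Fin n) := Finset.univ.filter fun i => 2 ≤ (supp i).card with hF
  set x : Fin n → EuclideanSpace ℝ (Fin d) := fun i => ∑ v ∈ V i, w i v • v with hx
  by_cases hFd : F.card ≤ d
  · -- few fractional indices: greedy rounding
    have hxconv : ∀ i, x i ∈ convexHull ℝ ((V i : Set (EuclideanSpace ℝ (Fin d)))) := by
      intro i
      rw [Finset.convexHull_eq]
      refine ⟨w i, hw0 i, hw1 i, ?_⟩
      rw [Finset.centerMass_eq_of_sum_1 _ _ (hw1 i)]
      rfl
    have hxF : ∀ i ∉ F, x i ∈ V i := by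
      intro i hiF
      have h1 : (supp i).card = 1 := by
        have h2 : ¬ 2 ≤ (supp i).card := fun h =>
          hiF (Finset.mem_filter.mpr ⟨Finset.mem_univ _, h⟩)
        have h3 := Finset.card_pos.mpr (hsuppne i)
        omega
      obtain ⟨v₀, hv₀⟩ := Finset.card_eq_one.mp h1
      have hv₀s : v₀ ∈ supp i := hv₀ ▸ Finset.mem_singleton_self v₀
      have hzero : ∀ v ∈ V i, v ∉ supp i → w i v = 0 := by
        intro v hv hvs
        by_contra h
        exact hvs (Finset.mem_filter.mpr ⟨hv, h⟩)
      have hxsum : x i = ∑ v ∈ supp i, w i v • v :=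
        (Finset.sum_subset (hsub i) (fun v hv hvs => by rw [hzero v hv hvs, zero_smul])).symm
      have hwsum : ∑ v ∈ supp i, w i v = 1 := by
        rw [← hw1 i]
        exact (Finset.sum_subset (hsub i) (fun v hv hvs => hzero v hv hvs))
      rw [hv₀, Finset.sum_singleton] at hxsum hwsum
      rw [hxsum, hwsum, one_smul]
      exact hsub i hv₀s
    obtain ⟨v', hv'mem, hv'⟩ := cb_greedy V hball F x 0 (fun i _ => hxconv i)
    refine ⟨fun i => if i ∈ F then v' i else x i, ?_, ?_⟩
    · intro i
      by_cases h : i ∈ F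
      · simpa [h] using hv'mem i h
      · simpa [h] using hxF i h
    · have hsplit : ∑ i, (if i ∈ F then v' i else x i)
          = ∑ i, x i + ∑ i ∈ F, (v' i - x i) := by
        have h1 : ∀ i, (if i ∈ F then v' i else x i)
            = x i + (if i ∈ F then v' i - x i else 0) := by
          intro i; by_cases h : i ∈ F <;> simp [h]
        rw [Finset.sum_congr rfl (fun i _ => h1 i), Finset.sum_add_distrib]
        congr 1
        rw [Finset.sum_ite_mem, Finset.univ_inter]
      rw [hsplit, hws, zero_add]
      rw [zero_add, norm_zero] at hv'
      have h0 : (0:ℝ) ^ 2 = 0 := by norm_num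
      rw [h0, zero_add] at hv'
      refine (Real.le_sqrt (norm_nonneg _) (Nat.cast_nonneg d)).mpr ?_
      have : (F.card : ℝ) ≤ d := by exact_mod_cast hFd
      linarith
  · -- too many fractional indices: exchange argument reduces total support
    push_neg at hFd
    have habF : ∀ i : Fin n, ∃ p : (EuclideanSpace ℝ (Fin d)) × (EuclideanSpace ℝ (Fin d)),
        i ∈ F → p.1 ∈ supp i ∧ p.2 ∈ supp i ∧ p.1 ≠ p.2 := by
      intro i
      by_cases h : i ∈ F
      · obtain ⟨a, ha, b, hb, hab⟩ := Finset.one_lt_card.mp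
          (show 1 < (supp i).card by have := (Finset.mem_filter.mp h).2; omega)
        exact ⟨(a, b), fun _ => ⟨ha, hb, hab⟩⟩
      · exact ⟨((hne i).choose, (hne i).choose), fun h' => absurd h' h⟩
    choose p hp using habF
    set a : Fin n → EuclideanSpace ℝ (Fin d) := fun i => (p i).1 with ha
    set b : Fin n → EuclideanSpace ℝ (Fin d) := fun i => (p i).2 with hb
    have hdep : ¬ LinearIndependent ℝ (fun i : ↥F => a ↑i - b ↑i) := by
      intro hli
      have h1 := hli.fintype_card_le_finrank
      rw [finrank_euclideanSpace_fin, Fintype.card_coe] at h1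
      omega
    obtain ⟨c, hcsum, i₀, hc₀⟩ := Fintype.not_linearIndependent_iff.mp hdep
    set G : Finset ↥F := Finset.univ.filter fun i => c i ≠ 0 with hG
    have hGne : G.Nonempty := ⟨i₀, Finset.mem_filter.mpr ⟨Finset.mem_univ _, hc₀⟩⟩
    set f : ↥F → ℝ := fun i =>
      if 0 < c i then w ↑i (b ↑i) / c i else w ↑i (a ↑i) / (-c i) with hf
    set t : ℝ := G.inf' hGne f with ht
    clear_value t
    have habs : ∀ i : ↥F, a ↑i ∈ supp ↑i ∧ b ↑i ∈ supp ↑i ∧ a ↑i ≠ b ↑i :=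
      fun i => hp ↑i i.2
    have hfpos : ∀ i ∈ G, 0 < f i := by
      intro i hiG
      have hci : c i ≠ 0 := (Finset.mem_filter.mp hiG).2
      obtain ⟨hai, hbi, hab⟩ := habs i
      by_cases hc : 0 < c i
      · simp only [hf, if_pos hc]
        exact div_pos (hwpos _ _ hbi) hc
      · simp only [hf, if_neg hc]
        refine div_pos (hwpos _ _ hai) ?_
        rcases hci.lt_or_gt with h | h
        · linarith
        · exact absurd h hc
    have htpos : 0 < t := by
      rw [ht, Finset.lt_inf'_iff]
      exact hfpos
    obtain ⟨i₁, hi₁G, ht₁⟩ := Finset.exists_mem_eq_inf' hGne f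
    rw [← ht] at ht₁
    set c' : Fin n → ℝ := fun j => if h : j ∈ F then c ⟨j, h⟩ else 0 with hc'
    have hc'F : ∀ (i : ↥F), c' ↑i = c i := by
      intro i
      simp only [hc', dif_pos i.2, Subtype.coe_eta]
    have hc'0 : ∀ j ∉ F, c' j = 0 := fun j h => dif_neg h
    set w' : Fin n → EuclideanSpace ℝ (Fin d) → ℝ := fun j v =>
      w j v + t * c' j * ((if v = a j then 1 else 0) - (if v = b j then 1 else 0)) with hw'
    -- new weights are nonnegative
    have hw'0 : ∀ j, ∀ v ∈ V j, 0 ≤ w' j v := by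
      intro j v hv
      by_cases hj : j ∈ F
      · set i : ↥F := ⟨j, hj⟩ with hi
        have hcc : c' j = c i := hc'F i
        by_cases hcz : c i = 0
        · simp [hw', hcc, hcz, hw0 j v hv]
        · have hiG : i ∈ G := Finset.mem_filter.mpr ⟨Finset.mem_univ _, hcz⟩
          have htle : t ≤ f i := le_trans (le_of_eq ht) (Finset.inf'_le f hiG)
          obtain ⟨hai, hbi, hab⟩ := habs i
          have hwa : 0 < w j (a j) := hwpos j _ hai
          have hwb : 0 < w j (b j) := hwpos j _ hbi
          by_cases hva : v = a j
          · have hvb : v ≠ b j := by rw [hva]; exact hab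
            subst hva
            simp only [hw', hcc, if_neg hvb, eq_self_iff_true, if_true]
            by_cases hc : 0 < c i
            · nlinarith
            · have hcneg : c i < 0 := (lt_or_gt_of_ne hcz).resolve_right hc
              rw [hf] at htle
              simp only [if_neg hc] at htle
              have h2 : t * (-c i) ≤ w j (a j) := by
                rw [← le_div_iff₀ (by linarith : (0:ℝ) < -c i)]
                exact htle
              nlinarith
          · by_cases hvb : v = b j
            · subst hvb
              simp only [hw', if_neg hva, eq_self_iff_true, if_true]
              rw [hcc]
              by_cases hc : 0 < c i
              · rw [hf] at htle
                simp only [if_pos hc] at htle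
                have h2 : t * c i ≤ w j (b j) := by
                  rw [← le_div_iff₀ hc]
                  exact htle
                nlinarith
              · have hcneg : c i < 0 := (lt_or_gt_of_ne hcz).resolve_right hc
                nlinarith
            · simp [hw', hva, hvb, hw0 j v hv]
      · simp [hw', hc'0 j hj, hw0 j v hv]
    -- new weights sum to one
    have hw'1 : ∀ j, ∑ v ∈ V j, w' j v = 1 := by
      intro j
      simp only [hw']
      rw [Finset.sum_add_distrib, hw1 j]
      have hrest : ∑ v ∈ V j, t * c' j *
          ((if v = a j then 1 else 0) - (if v = b j then 1 else 0)) = 0 := by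
        rw [← Finset.mul_sum]
        by_cases hj : j ∈ F
        · obtain ⟨hai, hbi, hab⟩ := habs ⟨j, hj⟩
          rw [Finset.sum_sub_distrib]
          rw [Finset.sum_ite_eq' (V j) (a j) (fun _ => (1:ℝ)),
            Finset.sum_ite_eq' (V j) (b j) (fun _ => (1:ℝ))]
          rw [if_pos (hsub j hai), if_pos (hsub j hbi)]
          ring
        · rw [hc'0 j hj]
          ring
      rw [hrest, add_zero]
    -- weighted sums of vertices still add to zero
    have hw's : (∑ j, ∑ v ∈ V j, w' j v • v) = 0 := by
      have hper : ∀ j, ∑ v ∈ V j, w' j v • v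
          = (∑ v ∈ V j, w j v • v) + (t * c' j) • (a j - b j) := by
        intro j
        simp only [hw', add_smul]
        rw [Finset.sum_add_distrib]
        congr 1
        have hpull : ∑ v ∈ V j, (t * c' j *
            ((if v = a j then 1 else 0) - (if v = b j then 1 else 0))) • v
            = (t * c' j) • ∑ v ∈ V j,
              (((if v = a j then 1 else 0) - (if v = b j then 1 else 0)) : ℝ) • v := by
          rw [Finset.smul_sum]
          exact Finset.sum_congr rfl fun v hv => by rw [smul_smul]
        rw [hpull]
        by_cases hj : j ∈ F
        · obtain ⟨hai, hbi, hab⟩ := habs ⟨j, hj⟩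
          have hδ : ∑ v ∈ V j,
              (((if v = a j then 1 else 0) - (if v = b j then 1 else 0)) : ℝ) • v
              = a j - b j := by
            have : ∀ v : EuclideanSpace ℝ (Fin d),
                (((if v = a j then 1 else 0) - (if v = b j then 1 else 0)) : ℝ) • v
                = (if v = a j then v else 0) - (if v = b j then v else 0) := by
              intro v
              split_ifs <;> simp
            rw [Finset.sum_congr rfl fun v _ => this v, Finset.sum_sub_distrib,
              Finset.sum_ite_eq' (V j) (a j) (fun v => v),
              Finset.sum_ite_eq' (V j) (b j) (fun v => v),
              if_pos (hsub j hai), if_pos (hsub j hbi)]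
          rw [hδ]
        · rw [hc'0 j hj]
          simp
      rw [Finset.sum_congr rfl fun j _ => hper j, Finset.sum_add_distrib, hws, zero_add]
      have hrel : ∑ j, c' j • (a j - b j) = 0 := by
        calc ∑ j, c' j • (a j - b j) = ∑ j ∈ F, c' j • (a j - b j) :=
              (Finset.sum_subset F.subset_univ
                (fun j _ hj => by rw [hc'0 j hj, zero_smul])).symm
          _ = ∑ i : ↥F, c' ↑i • (a ↑i - b ↑i) := (Finset.sum_coe_sort F _).symm
          _ = ∑ i : ↥F, c i • (a ↑i - b ↑i) :=
              Finset.sum_congr rfl fun i _ => by rw [hc'F i]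
          _ = 0 := hcsum
      calc ∑ j, (t * c' j) • (a j - b j) = t • ∑ j, c' j • (a j - b j) := by
            rw [Finset.smul_sum]
            exact Finset.sum_congr rfl fun j _ => by rw [smul_smul]
        _ = 0 := by rw [hrel, smul_zero]
    -- the support shrinks
    have hsubset : ∀ j, ((V j).filter fun v => w' j v ≠ 0) ⊆ supp j := by
      intro j v hv
      obtain ⟨hvV, hv0⟩ := Finset.mem_filter.mp hv
      refine Finset.mem_filter.mpr ⟨hvV, ?_⟩
      intro hwz
      apply hv0
      by_cases hj : j ∈ F
      · by_cases hcz : c' j = 0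
        · simp [hw', hcz, hwz]
        · obtain ⟨hai, hbi, hab⟩ := habs ⟨j, hj⟩
          have hva : v ≠ a j := by
            intro h; rw [h] at hwz
            exact absurd hwz (ne_of_gt (hwpos j _ hai))
          have hvb : v ≠ b j := by
            intro h; rw [h] at hwz
            exact absurd hwz (ne_of_gt (hwpos j _ hbi))
          simp [hw', hva, hvb, hwz]
      · simp [hw', hc'0 j hj, hwz]
    have hstrict : ((V (↑i₁ : Fin n)).filter fun v => w' ↑i₁ v ≠ 0).card
        < (supp ↑i₁).card := by
      have hcc : c' ↑i₁ = c i₁ := hc'F i₁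
      have hcz : c i₁ ≠ 0 := (Finset.mem_filter.mp hi₁G).2
      obtain ⟨hai, hbi, hab⟩ := habs i₁
      set v₁ : EuclideanSpace ℝ (Fin d) := if 0 < c i₁ then b ↑i₁ else a ↑i₁ with hv₁
      have hv₁s : v₁ ∈ supp ↑i₁ := by
        by_cases hc : 0 < c i₁ <;> simp only [hv₁, if_pos, if_neg, hc, ite_true, ite_false]
        · exact hbi
        · exact hai
      have hv₁z : w' ↑i₁ v₁ = 0 := by
        by_cases hc : 0 < c i₁
        · have hv₁b : v₁ = b ↑i₁ := by simp [hv₁, hc]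
          simp only [hf, if_pos hc] at ht₁
          simp only [hw', hv₁b, if_neg (Ne.symm hab), if_pos rfl, hcc]
          rw [ht₁]
          field_simp
          simp
        · have hv₁a : v₁ = a ↑i₁ := by simp [hv₁, hc]
          simp only [hf, if_neg hc] at ht₁
          simp only [hw', hv₁a, if_pos rfl, if_neg hab, hcc]
          rw [ht₁]
          have : -c i₁ ≠ 0 := by
            intro h
            exact hcz (by linarith)
          field_simp
          simp
      refine Finset.card_lt_card ?_
      rw [Finset.ssubset_iff_of_subset (hsubset ↑i₁)]
      refine ⟨v₁, hv₁s, ?_⟩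
      intro hmem
      exact (Finset.mem_filter.mp hmem).2 hv₁z
    have hlt : (∑ j, ((V j).filter fun v => w' j v ≠ 0).card)
        < ∑ j, (supp j).card := by
      refine Finset.sum_lt_sum (fun j _ => Finset.card_le_card (hsubset j)) ?_
      exact ⟨↑i₁, Finset.mem_univ _, hstrict⟩
    exact IH (∑ j, ((V j).filter fun v => w' j v ≠ 0).card)
      (lt_of_lt_of_le hlt hcard) w' hw'0 hw'1 hw's le_rfl

theorem colorful_balancing_euclidean (d n : ℕ)
    (V : Fin n → Finset (EuclideanSpace ℝ (Fin d)))
    (hne : ∀ i, (V i).Nonempty)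
    (hball : ∀ i, ∀ v ∈ V i, ‖v‖ ≤ 1)
    (h0 : (0 : EuclideanSpace ℝ (Fin d)) ∈
      ∑ i, convexHull ℝ (V i : Set (EuclideanSpace ℝ (Fin d)))) :
    ∃ v : Fin n → EuclideanSpace ℝ (Fin d),
      (∀ i, v i ∈ V i) ∧ ‖∑ i, v i‖ ≤ Real.sqrt d := by
  classical
  rw [Set.mem_fintype_sum] at h0
  obtain ⟨g, hg, hgsum⟩ := h0
  have hw : ∀ i, ∃ w : EuclideanSpace ℝ (Fin d) → ℝ,
      (∀ y ∈ V i, 0 ≤ w y) ∧ ∑ y ∈ V i, w y = 1 ∧ ∑ y ∈ V i, w y • y = g i := by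
    intro i
    have := hg i
    rw [Finset.convexHull_eq] at this
    obtain ⟨w, hw0, hw1, hwc⟩ := this
    refine ⟨w, hw0, hw1, ?_⟩
    rw [Finset.centerMass_eq_of_sum_1 _ _ hw1] at hwc
    exact hwc
  choose w hw0 hw1 hwc using hw
  refine cb_main V hne hball (∑ i, ((V i).filter fun v => w i v ≠ 0).card) w hw0 hw1 ?_ le_rfl
  rw [Finset.sum_congr rfl fun i _ => hwc i]
  exact hgsum
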